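/- Let ρ ∈ C[0,1] ∩ C¹(0,1) with ρial ≥ 1 satisfy on [1-s,1]: c₁ ≤ -[((ρ-1)²)_x](x) ≤ c₂ for positive constants c₁ < c₂, and ρ(1) = 1. Then for x ∈ [1-s,1]: √(c₁(1-x)) ≤ ρ(x) - 1 ≤ √(c₂(1-x)), and -c₂/(2√(c₁(1-x))) ≤ ρ_x(x) ≤ -c₁/(2√(c₂(1-x))); in particular ρ_x(x) → -∞ as x → 1⁻ at the rate (1-x)^{-1/2}. -/

import Mathlib

/-- Optimal `C^{1/2}` boundary behavior near the sonic endpoint `x = 1`: if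
`ρ ≥ 1`, `ρ(1) = 1` and `c₁ ≤ -[((ρ-1)²)_x] ≤ c₂` on `[1-s,1)` with
`0 < c₁ < c₂`, then `√(c₁(1-x)) ≤ ρ(x)-1 ≤ √(c₂(1-x))` on `[1-s,1]`,
`-c₂/(2√(c₁(1-x))) ≤ ρ_x(x) ≤ -c₁/(2√(c₂(1-x)))` on `[1-s,1)`, and in
particular `ρ_x(x) → -∞` as `x → 1⁻`. -/
theorem stmt_17 (s c₁ c₂ : ℝ) (hs0 : 0 < s) (hs1 : s < 1)
    (hc₁ : 0 < c₁) (hc : c₁ < c₂)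
    (ρ ρ' : ℝ → ℝ)
    (hρc : ContinuousOn ρ (Set.Icc (1-s) 1))
    (hρge : ∀ x ∈ Set.Icc (1-s) 1, 1 ≤ ρ x)
    (hρ1 : ρ 1 = 1)
    (hdiff : ∀ x ∈ Set.Ico (1-s) 1, HasDerivAt ρ (ρ' x) x)
    (hbd : ∀ x ∈ Set.Ico (1-s) 1,
      c₁ ≤ -(2*(ρ x - 1)*ρ' x) ∧ -(2*(ρ x - 1)*ρ' x) ≤ c₂) :
    (∀ x ∈ Set.Icc (1-s) 1,
      Real.sqrt (c₁*(1-x)) ≤ ρ x - 1 ∧ ρ x - 1 ≤ Real.sqrt (c₂*(1-x))) ∧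
    (∀ x ∈ Set.Ico (1-s) 1,
      -c₂/(2*Real.sqrt (c₁*(1-x))) ≤ ρ' x ∧
      ρ' x ≤ -c₁/(2*Real.sqrt (c₂*(1-x)))) ∧
    Filter.Tendsto ρ' (nhdsWithin 1 (Set.Iio 1)) Filter.atBot := by
  have hc₂ : 0 < c₂ := hc₁.trans hc
  have hle : (1:ℝ) - s ≤ 1 := by linarith
  have h1mem : (1:ℝ) ∈ Set.Icc (1-s) 1 := ⟨hle, le_refl 1⟩
  set D := Set.Icc (1-s) (1:ℝ) with hD
  have hint : interior D = Set.Ioo (1-s) 1 := interior_Icc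
  -- w = (ρ - 1)^2
  set w : ℝ → ℝ := fun x => (ρ x - 1)^2 with hw
  have hwc : ContinuousOn w D := by
    exact ((hρc.sub continuousOn_const).pow 2)
  have hwd : ∀ x ∈ Set.Ico (1-s) 1, HasDerivAt w (2*(ρ x - 1)*ρ' x) x := by
    intro x hx
    have := ((hdiff x hx).sub_const 1).fun_pow 2
    simpa [mul_comm, mul_assoc, mul_left_comm] using this
  -- upper bound on w: w x ≤ c₂ (1 - x)
  have hmono : MonotoneOn (fun x => w x + c₂ * x) D := by
    apply monotoneOn_of_hasDerivWithinAt_nonneg (convex_Icc _ _) (hwc.add (continuousOn_const.mul continuousOn_id))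
      (f' := fun x => 2*(ρ x - 1)*ρ' x + c₂)
    · intro x hx
      rw [hint] at hx
      have hx' : x ∈ Set.Ico (1-s) 1 := ⟨le_of_lt hx.1, hx.2⟩
      have hcx : HasDerivAt (fun y => c₂ * y) c₂ x := by
        simpa using (hasDerivAt_id x).const_mul c₂
      exact ((hwd x hx').add hcx).hasDerivWithinAt
    · intro x hx
      rw [hint] at hx
      have := (hbd x ⟨le_of_lt hx.1, hx.2⟩).2
      linarith
  have hanti : AntitoneOn (fun x => w x + c₁ * x) D := by
    apply antitoneOn_of_hasDerivWithinAt_nonpos (convex_Icc _ _) (hwc.add (continuousOn_const.mul continuousOn_id))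
      (f' := fun x => 2*(ρ x - 1)*ρ' x + c₁)
    · intro x hx
      rw [hint] at hx
      have hx' : x ∈ Set.Ico (1-s) 1 := ⟨le_of_lt hx.1, hx.2⟩
      have hcx : HasDerivAt (fun y => c₁ * y) c₁ x := by
        simpa using (hasDerivAt_id x).const_mul c₁
      exact ((hwd x hx').add hcx).hasDerivWithinAt
    · intro x hx
      rw [hint] at hx
      have := (hbd x ⟨le_of_lt hx.1, hx.2⟩).1
      linarith
  have hw1 : w 1 = 0 := by simp [hw, hρ1]
  have hwub : ∀ x ∈ D, w x ≤ c₂ * (1 - x) := by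
    intro x hx
    have := hmono hx h1mem hx.2
    simp only [hw1] at this
    linarith
  have hwlb : ∀ x ∈ D, c₁ * (1 - x) ≤ w x := by
    intro x hx
    have := hanti hx h1mem hx.2
    simp only [hw1] at this
    linarith
  -- first claim
  have hfirst : ∀ x ∈ Set.Icc (1-s) 1,
      Real.sqrt (c₁*(1-x)) ≤ ρ x - 1 ∧ ρ x - 1 ≤ Real.sqrt (c₂*(1-x)) := by
    intro x hx
    have hρx : 0 ≤ ρ x - 1 := by linarith [hρge x hx]
    have hsq : Real.sqrt (w x) = ρ x - 1 := by
      rw [hw]; exact Real.sqrt_sq hρx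
    constructor
    · calc Real.sqrt (c₁*(1-x)) ≤ Real.sqrt (w x) := Real.sqrt_le_sqrt (hwlb x hx)
        _ = ρ x - 1 := hsq
    · calc ρ x - 1 = Real.sqrt (w x) := hsq.symm
        _ ≤ Real.sqrt (c₂*(1-x)) := Real.sqrt_le_sqrt (hwub x hx)
  -- second claim
  have hsecond : ∀ x ∈ Set.Ico (1-s) 1,
      -c₂/(2*Real.sqrt (c₁*(1-x))) ≤ ρ' x ∧
      ρ' x ≤ -c₁/(2*Real.sqrt (c₂*(1-x))) := by
    intro x hx
    have hxI : x ∈ Set.Icc (1-s) 1 := ⟨hx.1, le_of_lt hx.2⟩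
    obtain ⟨h1, h2⟩ := hfirst x hxI
    set e₁ := Real.sqrt (c₁*(1-x)) with he₁
    set e₂ := Real.sqrt (c₂*(1-x)) with he₂
    have he₁pos : 0 < e₁ := Real.sqrt_pos.mpr (by nlinarith [hx.2])
    have he₂pos : 0 < e₂ := Real.sqrt_pos.mpr (by nlinarith [hx.2])
    have hde : 0 < ρ x - 1 := lt_of_lt_of_le he₁pos h1
    obtain ⟨hb1, hb2⟩ := hbd x hx
    have hρ'neg : ρ' x ≤ 0 := by
      by_contra h
      push_neg at h
      nlinarith [mul_pos hde h]
    have hm1 : (ρ x - 1) * ρ' x ≤ e₁ * ρ' x := mul_le_mul_of_nonpos_right h1 hρ'neg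
    have hm2 : e₂ * ρ' x ≤ (ρ x - 1) * ρ' x := mul_le_mul_of_nonpos_right h2 hρ'neg
    constructor
    · rw [div_le_iff₀ (by positivity)]
      nlinarith
    · rw [le_div_iff₀ (by positivity)]
      nlinarith
  refine ⟨hfirst, hsecond, ?_⟩
  -- tendsto atBot
  have hev : ∀ᶠ x in nhdsWithin 1 (Set.Iio 1), ρ' x ≤ -c₁/(2*Real.sqrt (c₂*(1-x))) := by
    have hIoo : Set.Ioo (1-s) 1 ∈ nhdsWithin 1 (Set.Iio 1) :=
      Ioo_mem_nhdsLT_of_mem ⟨by linarith, le_refl 1⟩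
    filter_upwards [hIoo] with x hx
    exact (hsecond x ⟨le_of_lt hx.1, hx.2⟩).2
  apply Filter.tendsto_atBot_mono' _ hev
  have h0 : Filter.Tendsto (fun x => 2*Real.sqrt (c₂*(1-x))) (nhdsWithin 1 (Set.Iio 1))
      (nhdsWithin 0 (Set.Ioi 0)) := by
    rw [tendsto_nhdsWithin_iff]
    constructor
    · have : Filter.Tendsto (fun x : ℝ => 2*Real.sqrt (c₂*(1-x))) (nhds 1) (nhds (2*Real.sqrt (c₂*(1-1)))) := by
        apply Filter.Tendsto.const_mul
        exact (Real.continuous_sqrt.comp (continuous_const.mul (continuous_const.sub continuous_id))).tendsto 1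
      simpa using this.mono_left nhdsWithin_le_nhds
    · filter_upwards [self_mem_nhdsWithin] with x hx
      have : (0:ℝ) < 1 - x := by exact sub_pos.mpr (Set.mem_Iio.mp hx)
      have : 0 < Real.sqrt (c₂*(1-x)) := Real.sqrt_pos.mpr (by positivity)
      exact Set.mem_Ioi.mpr (by positivity)
  have htop : Filter.Tendsto (fun x => c₁ * (2*Real.sqrt (c₂*(1-x)))⁻¹)
      (nhdsWithin 1 (Set.Iio 1)) Filter.atTop :=
    (tendsto_inv_nhdsGT_zero.comp h0).const_mul_atTop hc₁
  have : Filter.Tendsto (fun x => -(c₁ * (2*Real.sqrt (c₂*(1-x)))⁻¹))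
      (nhdsWithin 1 (Set.Iio 1)) Filter.atBot := Filter.tendsto_neg_atTop_atBot.comp htop
  refine this.congr (fun x => ?_)
  rw [neg_div, div_eq_mul_inv]
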